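/- (Pointwise version of Corollary 1: simultaneous vanishing temperature and non-vanishing chemical potential.) Let E be a real normed vector space, u : ℝ → E, s : ℝ → ℝ, w ∈ E, φ∞ > 0, and B : ℝ → (E →L[ℝ] E →L[ℝ] ℝ) with limit B∞, satisfying Filter.Tendsto (fun ω => Real.sqrt ω • u ω) atTop (𝓝 w), Filter.Tendsto s atTop (𝓝 φ∞), Filter.Tendsto B atTop (𝓝 B∞), and -(B∞ w w) > 0. Define 𝒦𝒯(ω) := Real.sqrt(-(B(ω)(u(ω))(u(ω)))) / (8π * s(ω)), v(ω) := (Real.sqrt((2ω+3)/(16π)) / s(ω)) • u(ω), and μ̃(ω) := Real.sqrt(-(1/s(ω)) * B(ω)(v(ω))(v(ω))). Then Filter.Tendsto 𝒦𝒯 atTop (𝓝 0) while Filter.Tendsto μ̃ atTop (𝓝 (Real.sqrt(-(B∞ w w)/(8π * φ∞^3)))) with Real.sqrt(-(B∞ w w)/(8π * φ∞^3)) > 0; hence the ω → ∞ limit is not the zero-temperature, zero-chemical-potential state characterizing the General Relativity limit. -/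

import Mathlib

open Filter Topology Real

private lemma clm_aux {E F : Type*} [NormedAddCommGroup E] [NormedSpace ℝ E]
    [NormedAddCommGroup F] [NormedSpace ℝ F]
    (C : ℝ → (E →L[ℝ] F)) (L : E →L[ℝ] F) (a : ℝ → E) (x : E)
    (hC : Filter.Tendsto C Filter.atTop (𝓝 L))
    (ha : Filter.Tendsto a Filter.atTop (𝓝 x)) :
    Filter.Tendsto (fun ω => C ω (a ω)) Filter.atTop (𝓝 (L x)) :=
  (isBoundedBilinearMap_apply.continuous.tendsto (L, x)).comp (hC.prodMk_nhds ha)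

/-- Pointwise version of Corollary 1: as `ω → ∞` the Jordan-frame temperature
`𝒦𝒯 = √(-∇ₐφ∇ᵃφ)/(8πφ)` tends to `0`, while the Einstein-frame chemical potential
`μ̃ = √(-(1/φ) g^{ab} ∇̃ₐφ̃ ∇̃_bφ̃)` tends to the strictly positive value
`√(-(B∞ w w)/(8π φ∞³))`; hence the `ω → ∞` limit is not the zero-temperature,
zero-chemical-potential state characterizing the General Relativity limit. -/
theorem temperature_vanishes_chemical_potential_does_not
    {E : Type*} [NormedAddCommGroup E] [NormedSpace ℝ E]
    (u : ℝ → E) (s : ℝ → ℝ) (w : E) (φinf : ℝ) (hφinf : 0 < φinf)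
    (B : ℝ → (E →L[ℝ] E →L[ℝ] ℝ)) (Binf : E →L[ℝ] E →L[ℝ] ℝ)
    (hu : Filter.Tendsto (fun ω => Real.sqrt ω • u ω) Filter.atTop (𝓝 w))
    (hs : Filter.Tendsto s Filter.atTop (𝓝 φinf))
    (hB : Filter.Tendsto B Filter.atTop (𝓝 Binf))
    (htimelike : 0 < -(Binf w w))
    (KT : ℝ → ℝ)
    (hKT : ∀ ω, KT ω = Real.sqrt (-(B ω (u ω) (u ω))) / (8 * Real.pi * s ω))
    (v : ℝ → E)
    (hv : ∀ ω, v ω = (Real.sqrt ((2 * ω + 3) / (16 * Real.pi)) / s ω) • u ω)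
    (μt : ℝ → ℝ)
    (hμt : ∀ ω, μt ω = Real.sqrt (-(1 / s ω) * B ω (v ω) (v ω))) :
    Filter.Tendsto KT Filter.atTop (𝓝 0) ∧
      Filter.Tendsto μt Filter.atTop
        (𝓝 (Real.sqrt (-(Binf w w) / (8 * Real.pi * φinf ^ 3)))) ∧
      0 < Real.sqrt (-(Binf w w) / (8 * Real.pi * φinf ^ 3)) := by
  have hπ : (0:ℝ) < Real.pi := Real.pi_pos
  have hsqrt_top : Tendsto Real.sqrt atTop atTop :=
    tendsto_atTop_atTop_of_monotone (fun a b h => Real.sqrt_le_sqrt h)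
      (fun b => ⟨b ^ 2, by rw [Real.sqrt_sq_eq_abs]; exact le_abs_self b⟩)
  -- u ω → 0
  have hu0 : Tendsto u atTop (𝓝 0) := by
    have hinv : Tendsto (fun ω : ℝ => (Real.sqrt ω)⁻¹) atTop (𝓝 0) :=
      hsqrt_top.inv_tendsto_atTop
    have h1 : Tendsto (fun ω : ℝ => (Real.sqrt ω)⁻¹ • (Real.sqrt ω • u ω)) atTop
        (𝓝 ((0:ℝ) • w)) := hinv.smul hu
    rw [zero_smul] at h1
    refine h1.congr' ?_
    filter_upwards [eventually_gt_atTop (0:ℝ)] with ω hω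
    rw [smul_smul, inv_mul_cancel₀ (ne_of_gt (Real.sqrt_pos.mpr hω)), one_smul]
  have hf0 : Tendsto (fun ω => B ω (u ω) (u ω)) atTop (𝓝 0) := by
    have := clm_aux (F := ℝ) (fun ω => B ω (u ω)) (Binf 0) u 0
      (clm_aux (F := E →L[ℝ] ℝ) B Binf u 0 hB hu0) hu0
    simpa using this
  have hg : Tendsto (fun ω => B ω (Real.sqrt ω • u ω) (Real.sqrt ω • u ω)) atTop
      (𝓝 (Binf w w)) :=
    clm_aux (F := ℝ) (fun ω => B ω (Real.sqrt ω • u ω)) (Binf w) _ w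
      (clm_aux (F := E →L[ℝ] ℝ) B Binf _ w hB hu) hu
  have hspos : ∀ᶠ ω in atTop, 0 < s ω := hs.eventually (eventually_gt_nhds hφinf)
  refine ⟨?_, ?_, Real.sqrt_pos.mpr (by positivity)⟩
  · -- KT → 0
    have h1 : Tendsto (fun ω => Real.sqrt (-(B ω (u ω) (u ω)))) atTop (𝓝 0) := by
      have hneg : Tendsto (fun ω => -(B ω (u ω) (u ω))) atTop (𝓝 0) := by
        simpa using hf0.neg
      have := (Real.continuous_sqrt.tendsto 0).comp hneg
      simpa [Function.comp_def] using this
    have hden : Tendsto (fun ω => 8 * Real.pi * s ω) atTop (𝓝 (8 * Real.pi * φinf)) :=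
      hs.const_mul _
    have h2 := h1.div hden (by positivity)
    rw [zero_div] at h2
    exact h2.congr (fun ω => (hKT ω).symm)
  · -- μt
    have harg : Tendsto (fun ω => -(1 / s ω) * B ω (v ω) (v ω)) atTop
        (𝓝 (-(Binf w w) / (8 * Real.pi * φinf ^ 3))) := by
      have hc : Tendsto (fun ω : ℝ => (2 * ω + 3) / (16 * Real.pi * ω)) atTop
          (𝓝 (1 / (8 * Real.pi))) := by
        have h3 : Tendsto (fun ω : ℝ => (2 + 3 * ω⁻¹) / (16 * Real.pi)) atTop
            (𝓝 ((2 + 3 * 0) / (16 * Real.pi))) :=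
          ((tendsto_const_nhds.add (tendsto_inv_atTop_zero.const_mul 3)).div_const _)
        have heq : (2 + 3 * (0:ℝ)) / (16 * Real.pi) = 1 / (8 * Real.pi) := by
          rw [div_eq_div_iff (by positivity) (by positivity)]; ring
        rw [heq] at h3
        refine h3.congr' ?_
        filter_upwards [eventually_gt_atTop (0:ℝ)] with ω hω
        rw [div_eq_div_iff (by positivity) (by positivity)]
        field_simp
      have hF : Tendsto
          (fun ω => -(B ω (Real.sqrt ω • u ω) (Real.sqrt ω • u ω)) *
            ((2 * ω + 3) / (16 * Real.pi * ω)) * (1 / (s ω) ^ 3)) atTop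
          (𝓝 (-(Binf w w) * (1 / (8 * Real.pi)) * (1 / φinf ^ 3))) :=
        (hg.neg.mul hc).mul (tendsto_const_nhds.div (hs.pow 3) (by positivity))
      have hval : -(Binf w w) * (1 / (8 * Real.pi)) * (1 / φinf ^ 3)
          = -(Binf w w) / (8 * Real.pi * φinf ^ 3) := by
        field_simp
      rw [hval] at hF
      refine hF.congr' ?_
      filter_upwards [eventually_gt_atTop (0:ℝ), hspos] with ω hω hsω
      have hsne : s ω ≠ 0 := ne_of_gt hsω
      have hωne : ω ≠ 0 := ne_of_gt hω
      have hcnn : (0:ℝ) ≤ (2 * ω + 3) / (16 * Real.pi) := by positivity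
      set a := Real.sqrt ((2 * ω + 3) / (16 * Real.pi)) with ha
      have hsq : a * a = (2 * ω + 3) / (16 * Real.pi) := Real.mul_self_sqrt hcnn
      have hBvv : B ω (v ω) (v ω)
          = (a / s ω) * ((a / s ω) * B ω (u ω) (u ω)) := by
        rw [hv]
        simp [map_smul, ContinuousLinearMap.smul_apply, smul_eq_mul]
        rfl
      have hgω : B ω (Real.sqrt ω • u ω) (Real.sqrt ω • u ω)
          = ω * B ω (u ω) (u ω) := by
        simp only [map_smul, ContinuousLinearMap.smul_apply, smul_eq_mul]
        rw [← mul_assoc, Real.mul_self_sqrt (le_of_lt hω)]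
      rw [hgω, hBvv]
      have hsq2 : a * a * (16 * Real.pi) = 2 * ω + 3 := by
        rw [hsq]; field_simp
      field_simp [Real.pi_ne_zero]
      linear_combination (B ω (u ω) (u ω)) * hsq2
    have := (Real.continuous_sqrt.tendsto _).comp harg
    exact this.congr (fun ω => (hμt ω).symm)
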